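/- Let 1 ≤ i ≤ n−1 and 1 ≤ k ≤ h < l ≤ n with i ≤ h. Then in the set whose minimum defines α_i, all terms R_{j+1}−R_i+d_j corresponding to indices h ≤ j < l may be replaced by the single term R_h − R_i + α'_{h−k+1}(k,l) without changing the minimum. In particular (taking k = 1, l = n), all terms with h ≤ j ≤ n−1 may be replaced by R_h − R_i + α_h. -/

import Mathlib

/-!
Combinatorial setting abstracting a good BONG over a dyadic local field.
`R : ℕ → ℤ` are the orders `R_i = ord a_i` (indices `1,…,n` used),
`d : ℕ → EReal` are the values `d_j = d(-a_j a_{j+1}) ∈ ℕ ∪ {∞}`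
(the allowed values are encoded in condition (G3) below).
-/

/-- The term `(R_{i+1} - R_i)/2 + e` appearing in the definition of `α_i`. -/
noncomputable def halfTerm (e : ℤ) (R : ℕ → ℤ) (i : ℕ) : EReal :=
  (((R (i + 1) - R i : ℝ) / 2 + (e : ℝ) : ℝ) : EReal)

/-- The set whose minimum defines `α_i`. -/
noncomputable def alphaSet (e : ℤ) (n : ℕ) (R : ℕ → ℤ) (d : ℕ → EReal) (i : ℕ) :
    Set EReal :=
  {halfTerm e R i}
    ∪ {x | ∃ j, 1 ≤ j ∧ j ≤ i ∧ x = ((R (i + 1) - R j : ℝ) : EReal) + d j}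
    ∪ {x | ∃ j, i ≤ j ∧ j + 1 ≤ n ∧ x = ((R (j + 1) - R i : ℝ) : EReal) + d j}

/-- The invariant `α_i = α_i(L)`, for `1 ≤ i ≤ n - 1`. -/
noncomputable def alpha (e : ℤ) (n : ℕ) (R : ℕ → ℤ) (d : ℕ → EReal) (i : ℕ) : EReal :=
  sInf (alphaSet e n R d i)

/-- `α'_m(k,l)`: the `α`-invariant of the truncated data `R_k,…,R_l`, `d_k,…,d_{l-1}`. -/
noncomputable def alphaT (e : ℤ) (R : ℕ → ℤ) (d : ℕ → EReal) (k l m : ℕ) : EReal :=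
  alpha e (l - k + 1) (fun j => R (k + j - 1)) (fun j => d (k + j - 1)) m

/-- Conditions (G1)-(G4) on the data `(e, n, R, d)`, abstracting a good BONG. -/
structure GoodBONG (e : ℤ) (n : ℕ) (R : ℕ → ℤ) (d : ℕ → EReal) : Prop where
  he : 1 ≤ e
  hn : 2 ≤ n
  g1 : ∀ i, 1 ≤ i → i + 2 ≤ n → R i ≤ R (i + 2)
  g2a : ∀ j, 1 ≤ j → j + 1 ≤ n → 0 ≤ R (j + 1) - R j + 2 * e
  g2b : ∀ j, 1 ≤ j → j + 1 ≤ n → 0 ≤ ((R (j + 1) - R j : ℝ) : EReal) + d j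
  g3 : ∀ j, 1 ≤ j → j + 1 ≤ n →
    d j = 0 ∨ (∃ m : ℕ, Odd m ∧ (m : ℤ) ≤ 2 * e - 1 ∧ d j = ((m : ℝ) : EReal)) ∨
      d j = (((2 * e : ℤ) : ℝ) : EReal) ∨ d j = ⊤
  g4odd : ∀ j, 1 ≤ j → j + 1 ≤ n → Odd (R (j + 1) - R j) →
    0 < R (j + 1) - R j ∧ d j = 0
  g4even : ∀ j, 1 ≤ j → j + 1 ≤ n → Even (R (j + 1) - R j) → 0 < d j

lemma sum_mono (n : ℕ) (R : ℕ → ℤ)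
    (H1 : ∀ i, 1 ≤ i → i + 2 ≤ n → R i ≤ R (i + 2)) :
    ∀ h i, 1 ≤ i → i ≤ h → h + 1 ≤ n → R i + R (i + 1) ≤ R h + R (h + 1) := by
  intro h
  induction h with
  | zero => intro i h1 h2 _; omega
  | succ h ih =>
    intro i h1 h2 h3
    rcases Nat.lt_or_ge i (h + 1) with hlt | hge
    · have hrec := ih i h1 (by omega) (by omega)
      have h2' := H1 h (by omega) (by omega)
      have hE : h + 1 + 1 = h + 2 := rfl
      rw [hE]
      linarith
    · have : i = h + 1 := by omega
      subst this
      exact le_refl _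

lemma mem_alphaSet_iff (e : ℤ) (n : ℕ) (R : ℕ → ℤ) (d : ℕ → EReal) (i : ℕ) (x : EReal) :
    x ∈ alphaSet e n R d i ↔ x = halfTerm e R i ∨
      (∃ j, 1 ≤ j ∧ j ≤ i ∧ x = ((R (i + 1) - R j : ℝ) : EReal) + d j) ∨
      (∃ j, i ≤ j ∧ j + 1 ≤ n ∧ x = ((R (j + 1) - R i : ℝ) : EReal) + d j) := by
  simp [alphaSet, or_assoc]

lemma alphaSet_finite (e : ℤ) (n : ℕ) (R : ℕ → ℤ) (d : ℕ → EReal) (i : ℕ) :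
    (alphaSet e n R d i).Finite := by
  have h1 : {x : EReal | ∃ j, 1 ≤ j ∧ j ≤ i ∧ x = ((R (i + 1) - R j : ℝ) : EReal) + d j}
      ⊆ (fun j => ((R (i + 1) - R j : ℝ) : EReal) + d j) '' Set.Icc 1 i := by
    rintro x ⟨j, hj1, hj2, rfl⟩; exact ⟨j, ⟨hj1, hj2⟩, rfl⟩
  have h2 : {x : EReal | ∃ j, i ≤ j ∧ j + 1 ≤ n ∧ x = ((R (j + 1) - R i : ℝ) : EReal) + d j}
      ⊆ (fun j => ((R (j + 1) - R i : ℝ) : EReal) + d j) '' Set.Icc i n := by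
    rintro x ⟨j, hj1, hj2, rfl⟩; exact ⟨j, ⟨hj1, by omega⟩, rfl⟩
  exact ((Set.finite_singleton _).union (((Set.finite_Icc 1 i).image _).subset h1)).union
    (((Set.finite_Icc i n).image _).subset h2)

lemma alphaSet_nonempty (e : ℤ) (n : ℕ) (R : ℕ → ℤ) (d : ℕ → EReal) (i : ℕ) :
    (alphaSet e n R d i).Nonempty :=
  ⟨halfTerm e R i, Or.inl (Or.inl rfl)⟩

lemma stmt6_main (e : ℤ) (n : ℕ) (R : ℕ → ℤ) (d : ℕ → EReal)
    (hg1 : ∀ i, 1 ≤ i → i + 2 ≤ n → R i ≤ R (i + 2)) (i k h l : ℕ)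
    (hi : 1 ≤ i) (hin : i + 1 ≤ n) (hk : 1 ≤ k) (hkh : k ≤ h) (hhl : h < l)
    (hln : l ≤ n) (hih : i ≤ h) :
    alpha e n R d i =
      sInf ({halfTerm e R i}
        ∪ {x | ∃ j, 1 ≤ j ∧ j ≤ i ∧ x = ((R (i + 1) - R j : ℝ) : EReal) + d j}
        ∪ {((R h - R i : ℝ) : EReal) + alphaT e R d k l (h - k + 1)}
        ∪ {x | ∃ j, i ≤ j ∧ j + 1 ≤ n ∧ (j < h ∨ l ≤ j) ∧
            x = ((R (j + 1) - R i : ℝ) : EReal) + d j}) := by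
  set R' : ℕ → ℤ := fun j => R (k + j - 1) with hR'
  set d' : ℕ → EReal := fun j => d (k + j - 1) with hd'
  set m : ℕ := h - k + 1 with hm
  set n' : ℕ := l - k + 1 with hn'
  have hT : alphaT e R d k l m = sInf (alphaSet e n' R' d' m) := rfl
  have hkey : ∀ j, 1 ≤ j → j ≤ h → (R j : ℝ) + R (j + 1) ≤ (R h : ℝ) + R (h + 1) := by
    intro j h1 h2
    exact_mod_cast sum_mono n R hg1 h j h1 h2 (by omega)
  have hA : ∀ x ∈ alphaSet e n R d i, alpha e n R d i ≤ x := fun x hx => sInf_le hx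
  have hhalfA : halfTerm e R i ∈ alphaSet e n R d i := Or.inl (Or.inl rfl)
  apply le_antisymm
  · -- alpha i ≤ sInf B
    refine le_sInf fun b hb => ?_
    simp only [Set.mem_union, Set.mem_singleton_iff, Set.mem_setOf_eq] at hb
    rcases hb with ((hb | hb) | hb) | hb
    · exact hb ▸ hA _ hhalfA
    · obtain ⟨j, hj1, hj2, rfl⟩ := hb
      exact hA _ (Or.inl (Or.inr ⟨j, hj1, hj2, rfl⟩))
    · -- the replaced term
      subst hb
      rw [hT]
      have hs0 := (alphaSet_nonempty e n' R' d' m).csInf_mem (alphaSet_finite e n' R' d' m)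
      set s0 : EReal := sInf (alphaSet e n' R' d' m) with hs0def
      rw [mem_alphaSet_iff] at hs0
      rcases hs0 with hs0 | ⟨j', hj1, hj2, hs0⟩ | ⟨j', hj1, hj2, hs0⟩
      · -- half term of truncated data
        have i1 : k + (m + 1) - 1 = h + 1 := by omega
        have i2 : k + m - 1 = h := by omega
        simp only [halfTerm, hR'] at hs0
        rw [i1, i2] at hs0
        rw [hs0]
        refine le_trans (hA _ hhalfA) ?_
        rw [← EReal.coe_add]
        simp only [halfTerm, EReal.coe_le_coe_iff]
        have := hkey i hi hih
        push_cast
        linarith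
      · -- lower terms of truncated data: k ≤ j ≤ h
        have hjh : k + j' - 1 ≤ h := by omega
        have i1 : k + (m + 1) - 1 = h + 1 := by omega
        simp only [hR', hd'] at hs0
        rw [i1] at hs0
        set j : ℕ := k + j' - 1 with hj
        have hj1' : 1 ≤ j := by omega
        rw [hs0, ← add_assoc, ← EReal.coe_add]
        rcases le_or_gt j i with hji | hij
        · refine le_trans (hA _ (Or.inl (Or.inr ⟨j, hj1', hji, rfl⟩))) ?_
          apply add_le_add_left
          rw [EReal.coe_le_coe_iff]
          have := hkey i hi hih
          push_cast
          linarith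
        · have hjn : j + 1 ≤ n := by omega
          refine le_trans (hA _ (Or.inr ⟨j, by omega, hjn, rfl⟩)) ?_
          apply add_le_add_left
          rw [EReal.coe_le_coe_iff]
          have := hkey j hj1' hjh
          push_cast
          linarith
      · -- upper terms: h ≤ j ≤ l-1, coincide with removed terms
        have i1 : k + (j' + 1) - 1 = (k + j' - 1) + 1 := by omega
        have i2 : k + m - 1 = h := by omega
        simp only [hR', hd'] at hs0
        rw [i1, i2] at hs0
        set j : ℕ := k + j' - 1 with hj
        have hjh : h ≤ j := by omega
        have hjl : j + 1 ≤ l := by omega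
        rw [hs0, ← add_assoc, ← EReal.coe_add]
        have harr : ((R h - R i : ℤ) : ℝ) + ((R (j + 1) - R h : ℤ) : ℝ)
            = ((R (j + 1) - R i : ℤ) : ℝ) := by push_cast; ring
        rw [show ((R h : ℝ) - R i) + ((R (j + 1) : ℝ) - R h) = (R (j + 1) : ℝ) - R i by ring]
        exact hA _ (Or.inr ⟨j, by omega, by omega, rfl⟩)
    · obtain ⟨j, hj1, hj2, _, rfl⟩ := hb
      exact hA _ (Or.inr ⟨j, hj1, hj2, rfl⟩)
  · -- sInf B ≤ alpha i
    refine le_sInf fun a ha => ?_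
    have hB : ∀ x, x ∈ ({halfTerm e R i}
        ∪ {x | ∃ j, 1 ≤ j ∧ j ≤ i ∧ x = ((R (i + 1) - R j : ℝ) : EReal) + d j}
        ∪ {((R h - R i : ℝ) : EReal) + alphaT e R d k l m}
        ∪ {x : EReal | ∃ j, i ≤ j ∧ j + 1 ≤ n ∧ (j < h ∨ l ≤ j) ∧
            x = ((R (j + 1) - R i : ℝ) : EReal) + d j}) → sInf _ ≤ x :=
      fun x hx => sInf_le hx
    rw [mem_alphaSet_iff] at ha
    rcases ha with rfl | ⟨j, hj1, hj2, rfl⟩ | ⟨j, hj1, hj2, rfl⟩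
    · exact hB _ (Or.inl (Or.inl (Or.inl rfl)))
    · exact hB _ (Or.inl (Or.inl (Or.inr ⟨j, hj1, hj2, rfl⟩)))
    · by_cases hc : j < h ∨ l ≤ j
      · exact hB _ (Or.inr ⟨j, hj1, hj2, hc, rfl⟩)
      · push_neg at hc
        obtain ⟨hhj, hjl⟩ := hc
        refine le_trans (hB _ (Or.inl (Or.inr rfl))) ?_
        rw [hT]
        set j' : ℕ := j - k + 1 with hj'
        have hmem : ((R' (j' + 1) - R' m : ℝ) : EReal) + d' j' ∈ alphaSet e n' R' d' m := by
          rw [mem_alphaSet_iff]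
          exact Or.inr (Or.inr ⟨j', by omega, by omega, rfl⟩)
        refine le_trans (add_le_add_right (sInf_le hmem) _) ?_
        have i1 : k + (j' + 1) - 1 = j + 1 := by omega
        have i2 : k + m - 1 = h := by omega
        have i3 : k + j' - 1 = j := by omega
        simp only [hR', hd']
        rw [i1, i2, i3, ← add_assoc, ← EReal.coe_add]
        rw [show ((R h : ℝ) - R i) + ((R (j + 1) : ℝ) - R h) = (R (j + 1) : ℝ) - R i by ring]

theorem stmt6' (e : ℤ) (n : ℕ) (R : ℕ → ℤ) (d : ℕ → EReal)
    (hg1 : ∀ i, 1 ≤ i → i + 2 ≤ n → R i ≤ R (i + 2)) (i k h l : ℕ)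
    (hi : 1 ≤ i) (hin : i + 1 ≤ n) (hk : 1 ≤ k) (hkh : k ≤ h) (hhl : h < l)
    (hln : l ≤ n) (hih : i ≤ h) :
    alpha e n R d i =
      sInf ({halfTerm e R i}
        ∪ {x | ∃ j, 1 ≤ j ∧ j ≤ i ∧ x = ((R (i + 1) - R j : ℝ) : EReal) + d j}
        ∪ {((R h - R i : ℝ) : EReal) + alphaT e R d k l (h - k + 1)}
        ∪ {x | ∃ j, i ≤ j ∧ j + 1 ≤ n ∧ (j < h ∨ l ≤ j) ∧
            x = ((R (j + 1) - R i : ℝ) : EReal) + d j}) ∧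
    alpha e n R d i =
      sInf ({halfTerm e R i}
        ∪ {x | ∃ j, 1 ≤ j ∧ j ≤ i ∧ x = ((R (i + 1) - R j : ℝ) : EReal) + d j}
        ∪ {((R h - R i : ℝ) : EReal) + alpha e n R d h}
        ∪ {x | ∃ j, i ≤ j ∧ j < h ∧ x = ((R (j + 1) - R i : ℝ) : EReal) + d j}) := by
  constructor
  · exact stmt6_main e n R d hg1 i k h l hi hin hk hkh hhl hln hih
  · have hmain := stmt6_main e n R d hg1 i 1 h n hi hin le_rfl (by omega) (by omega)
      le_rfl hih
    have hT : alphaT e R d 1 n (h - 1 + 1) = alpha e n R d h := by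
      have h1 : (fun j => R (1 + j - 1)) = R := funext fun j => by congr 1; omega
      have h2 : (fun j => d (1 + j - 1)) = d := funext fun j => by congr 1; omega
      have h3 : n - 1 + 1 = n := by omega
      have h4 : h - 1 + 1 = h := by omega
      rw [alphaT, h1, h2, h3, h4]
    have hset : {x : EReal | ∃ j, i ≤ j ∧ j + 1 ≤ n ∧ (j < h ∨ n ≤ j) ∧
          x = ((R (j + 1) - R i : ℝ) : EReal) + d j}
        = {x : EReal | ∃ j, i ≤ j ∧ j < h ∧ x = ((R (j + 1) - R i : ℝ) : EReal) + d j} := by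
      ext x
      simp only [Set.mem_setOf_eq]
      constructor
      · rintro ⟨j, hj1, hj2, hj3, rfl⟩
        exact ⟨j, hj1, by omega, rfl⟩
      · rintro ⟨j, hj1, hj2, rfl⟩
        exact ⟨j, hj1, by omega, Or.inl hj2, rfl⟩
    rw [hmain, hT, hset]

/-- for `1 ≤ i ≤ n-1` and `1 ≤ k ≤ h < l ≤ n` with `i ≤ h`, in the set
defining `α_i` all terms `R_{j+1} - R_i + d_j` with `h ≤ j < l` may be replaced by the
single term `R_h - R_i + α'_{h-k+1}(k,l)`. In particular (for `k = 1`, `l = n`) all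
terms with `h ≤ j ≤ n-1` may be replaced by `R_h - R_i + α_h`. -/
theorem stmt6 (e : ℤ) (n : ℕ) (R : ℕ → ℤ) (d : ℕ → EReal)
    (H : GoodBONG e n R d) (i k h l : ℕ)
    (hi : 1 ≤ i) (hin : i + 1 ≤ n) (hk : 1 ≤ k) (hkh : k ≤ h) (hhl : h < l)
    (hln : l ≤ n) (hih : i ≤ h) :
    alpha e n R d i =
      sInf ({halfTerm e R i}
        ∪ {x | ∃ j, 1 ≤ j ∧ j ≤ i ∧ x = ((R (i + 1) - R j : ℝ) : EReal) + d j}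
        ∪ {((R h - R i : ℝ) : EReal) + alphaT e R d k l (h - k + 1)}
        ∪ {x | ∃ j, i ≤ j ∧ j + 1 ≤ n ∧ (j < h ∨ l ≤ j) ∧
            x = ((R (j + 1) - R i : ℝ) : EReal) + d j}) ∧
    alpha e n R d i =
      sInf ({halfTerm e R i}
        ∪ {x | ∃ j, 1 ≤ j ∧ j ≤ i ∧ x = ((R (i + 1) - R j : ℝ) : EReal) + d j}
        ∪ {((R h - R i : ℝ) : EReal) + alpha e n R d h}
        ∪ {x | ∃ j, i ≤ j ∧ j < h ∧ x = ((R (j + 1) - R i : ℝ) : EReal) + d j}) := by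
  exact stmt6' e n R d H.g1 i k h l hi hin hk hkh hhl hln hih
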